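/- Let p be a prime, G a group, and M a Z_p[G]-module that is finitely generated over Z_p[G]. Suppose M/pM, as a module over F_p[G], satisfies Ext^i_{F_p[G]}(M/pM, F_p[G]) = 0 for i = 0, 1. Then Hom_{Z_p[G]}(M, Z_p[G]) = 0. -/

import Mathlib

open CategoryTheory

/-- The `i`-th Ext group `Ext^i_Λ(M, N)` of `Λ`-modules, as an abelian group. -/
noncomputable abbrev extGrp (Λ : Type) [Ring Λ] (M N : Type) [AddCommGroup M] [Module Λ M]
    [AddCommGroup N] [Module Λ N] (i : ℕ) : Type :=
  ((Ext ℤ (ModuleCat Λ) i).obj (Opposite.op (ModuleCat.of Λ M))).obj (ModuleCat.of Λ N)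

/-- The coefficient-reduction ring homomorphism `ℤ_p[G] → 𝔽_p[G]`. -/
noncomputable def redHom (p : ℕ) [Fact p.Prime] (G : Type) [Group G] :
    MonoidAlgebra ℤ_[p] G →+* MonoidAlgebra (ZMod p) G :=
  MonoidAlgebra.liftNCRingHom
    ((MonoidAlgebra.singleOneRingHom).comp (PadicInt.toZMod))
    (MonoidAlgebra.of (ZMod p) G)
    (fun x y => by
      show Commute (MonoidAlgebra.single 1 (PadicInt.toZMod x)) (MonoidAlgebra.single y 1)
      unfold Commute SemiconjBy
      rw [MonoidAlgebra.single_mul_single, MonoidAlgebra.single_mul_single,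
        one_mul, mul_one, one_mul, mul_one])

open Limits in
lemma subsingleton_hom_of_ext0 {R : Type} [Ring R] (A B : Type) [AddCommGroup A] [Module R A]
    [AddCommGroup B] [Module R B] (h : Subsingleton (extGrp R A B 0)) :
    Subsingleton (A →ₗ[R] B) := by
  classical
  let C := ModuleCat R
  let X : C := ModuleCat.of R A
  let Y : C := ModuleCat.of R B
  let L := (linearYoneda ℤ C).obj Y
  haveI : PreservesLimits (L ⋙ forget _) := (inferInstance : PreservesLimits (yoneda.obj Y))
  haveI : PreservesLimits L := preservesLimits_of_reflects_of_preserves _ (forget _)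
  haveI : PreservesFiniteColimits L.rightOp := preservesFiniteColimits_rightOp _
  let e : (L.rightOp.obj X).unop ≅ ((L.rightOp.leftDerived 0).obj X).unop :=
    (L.rightOp.leftDerivedZeroIsoSelf.app X).unop
  let E := ((forget (ModuleCat ℤ)).mapIso e).toEquiv
  refine ⟨fun f g => ?_⟩
  have hfg : E (ModuleCat.ofHom f : X ⟶ Y) = E (ModuleCat.ofHom g : X ⟶ Y) := @Subsingleton.elim _ h _ _
  exact congrArg ModuleCat.Hom.hom (E.injective hfg)

section Aux

variable (p : ℕ) [Fact p.Prime] (G : Type) [Group G]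

lemma redHom_apply (a : MonoidAlgebra ℤ_[p] G) (γ : G) :
    (redHom p G a).coeff γ = PadicInt.toZMod (a.coeff γ) := by
  classical
  induction a using MonoidAlgebra.induction_linear with
  | zero => simp
  | add f g hf hg =>
      rw [map_add, MonoidAlgebra.coeff_add, Finsupp.add_apply, hf, hg, MonoidAlgebra.coeff_add,
        Finsupp.add_apply, map_add]
  | single g c =>
      have h1 : redHom p G (MonoidAlgebra.single g c) =
          MonoidAlgebra.single g (PadicInt.toZMod c) := by
        unfold redHom
        rw [MonoidAlgebra.liftNCRingHom]
        show MonoidAlgebra.liftNC _ _ (MonoidAlgebra.single g c) = _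
        rw [MonoidAlgebra.liftNC_single]
        show MonoidAlgebra.single 1 (PadicInt.toZMod c) * MonoidAlgebra.single g 1 = _
        rw [MonoidAlgebra.single_mul_single, one_mul, mul_one]
      rw [h1]
      show (MonoidAlgebra.single g (PadicInt.toZMod c)).coeff γ = PadicInt.toZMod ((MonoidAlgebra.single g c).coeff γ)
      rw [MonoidAlgebra.coeff_single_apply, MonoidAlgebra.coeff_single_apply]
      split_ifs
      · rfl
      · rw [map_zero]

lemma redHom_surjective : Function.Surjective (redHom p G) := by
  classical
  intro x
  induction x using MonoidAlgebra.induction_linear with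
  | zero => exact ⟨0, map_zero _⟩
  | add f g hf hg =>
      obtain ⟨a, ha⟩ := hf
      obtain ⟨b, hb⟩ := hg
      exact ⟨a + b, by rw [map_add, ha, hb]⟩
  | single g z =>
      refine ⟨MonoidAlgebra.single g ((z.val : ℤ_[p])), MonoidAlgebra.ext (Finsupp.ext fun γ => ?_)⟩
      rw [redHom_apply]
      show PadicInt.toZMod ((MonoidAlgebra.single g ((z.val : ℤ_[p]))).coeff γ) = (MonoidAlgebra.single g z).coeff γ
      rw [MonoidAlgebra.coeff_single_apply, MonoidAlgebra.coeff_single_apply]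
      split_ifs
      · rw [map_natCast, ZMod.natCast_val, ZMod.cast_id]
      · rw [map_zero]

end Aux

/-- Let `p` be a prime, `G` a group, and `M` a `ℤ_p[G]`-module that is finitely
generated over `ℤ_p[G]`.  Suppose `M/pM` (realized as an `𝔽_p[G]`-module `N` together with a
surjection `π : M → N` with kernel `pM`, compatible with the ring homomorphism
`ℤ_p[G] → 𝔽_p[G]`) satisfies `Ext^i_{𝔽_p[G]}(M/pM, 𝔽_p[G]) = 0` for `i = 0, 1`.  Then
`Hom_{ℤ_p[G]}(M, ℤ_p[G]) = 0`. -/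
theorem hom_vanish_of_mod_p_pseudoNull (p : ℕ) [Fact p.Prime] (G : Type) [Group G]
    (M : Type) [AddCommGroup M] [Module (MonoidAlgebra ℤ_[p] G) M]
    [Module.Finite (MonoidAlgebra ℤ_[p] G) M]
    (N : Type) [AddCommGroup N] [Module (MonoidAlgebra (ZMod p) G) N]
    (π : M →+ N) (hπ : Function.Surjective π)
    (hker : ∀ m : M, π m = 0 ↔
      ∃ m' : M, m = (algebraMap ℤ_[p] (MonoidAlgebra ℤ_[p] G) (p : ℤ_[p])) • m')
    (hcompat : ∀ (a : MonoidAlgebra ℤ_[p] G) (m : M), π (a • m) = redHom p G a • π m)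
    (hvanish : ∀ i : ℕ, i ≤ 1 →
      Subsingleton (extGrp (MonoidAlgebra (ZMod p) G) N (MonoidAlgebra (ZMod p) G) i)) :
    Subsingleton (M →ₗ[MonoidAlgebra ℤ_[p] G] MonoidAlgebra ℤ_[p] G) := by
  classical
  have hp : p.Prime := Fact.out
  have hp0 : (p : ℤ_[p]) ≠ 0 := Nat.cast_ne_zero.mpr hp.ne_zero
  set Λ := MonoidAlgebra ℤ_[p] G with hΛ
  -- the coefficient formula for multiplication by a scalar
  have halg : ∀ (c : ℤ_[p]) (x : Λ) (γ : G), (algebraMap ℤ_[p] Λ c * x).coeff γ = c * x.coeff γ := by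
    intro c x γ
    have h1 : algebraMap ℤ_[p] Λ c = MonoidAlgebra.single 1 c := by
      have h0 := congrFun (MonoidAlgebra.coe_algebraMap (R := ℤ_[p]) (A := ℤ_[p]) (M := G)) c
      rw [Function.comp_apply, Algebra.algebraMap_self, RingHom.id_apply] at h0
      exact h0
    rw [h1, MonoidAlgebra.single_one_mul_apply]
  set r : Λ := algebraMap ℤ_[p] Λ (p : ℤ_[p]) with hr
  have hr_apply : ∀ (x : Λ) (γ : G), (r * x).coeff γ = (p : ℤ_[p]) * x.coeff γ := fun x γ => halg _ x γ
  have hcancel : ∀ x y : Λ, r * x = r * y → x = y := by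
    intro x y h
    ext γ
    exact mul_left_cancel₀ hp0 (by rw [← hr_apply, ← hr_apply, h])
  have hredr : redHom p G r = 0 := by
    ext γ
    rw [redHom_apply]
    have h1 : r = MonoidAlgebra.single 1 (p : ℤ_[p]) := by
      rw [hr]
      have h0 := congrFun (MonoidAlgebra.coe_algebraMap (R := ℤ_[p]) (A := ℤ_[p]) (M := G)) (p : ℤ_[p])
      rw [Function.comp_apply, Algebra.algebraMap_self, RingHom.id_apply] at h0
      exact h0
    rw [h1]
    show PadicInt.toZMod ((MonoidAlgebra.single 1 ((p : ℕ) : ℤ_[p])).coeff γ) = (0 : MonoidAlgebra (ZMod p) G).coeff γ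
    rw [MonoidAlgebra.coeff_single_apply]
    split_ifs
    · rw [map_natCast, ZMod.natCast_self]; rfl
    · rw [map_zero]; rfl
  have hsub : Subsingleton (N →ₗ[MonoidAlgebra (ZMod p) G] MonoidAlgebra (ZMod p) G) :=
    subsingleton_hom_of_ext0 _ _ (hvanish 0 (by norm_num))
  -- main step : every linear functional is divisible by r
  have step : ∀ g : M →ₗ[Λ] Λ, ∃ g' : M →ₗ[Λ] Λ, ∀ m, g m = r * g' m := by
    intro g
    have hwd : ∀ m m' : M, π m = π m' → redHom p G (g m) = redHom p G (g m') := by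
      intro m m' hmm
      have h0 : π (m - m') = 0 := by rw [map_sub, hmm, sub_self]
      obtain ⟨m'', hm''⟩ := (hker _).mp h0
      have h1 : g m - g m' = r * g m'' := by
        rw [← map_sub, hm'', LinearMap.map_smul, smul_eq_mul]
      have h2 : redHom p G (g m) - redHom p G (g m') = 0 := by
        rw [← map_sub, h1, map_mul, hredr, zero_mul]
      exact sub_eq_zero.mp h2
    set s := Function.surjInv hπ with hs_def
    have hs : ∀ x, π (s x) = x := Function.surjInv_eq hπ
    set φfun : N → MonoidAlgebra (ZMod p) G := fun x => redHom p G (g (s x)) with hφ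
    have hφπ : ∀ m, φfun (π m) = redHom p G (g m) := fun m => hwd _ _ (hs (π m))
    have hadd : ∀ x y, φfun (x + y) = φfun x + φfun y := by
      intro x y
      obtain ⟨m, rfl⟩ := hπ x
      obtain ⟨m', rfl⟩ := hπ y
      rw [← map_add, hφπ, hφπ, hφπ, map_add, map_add]
    have hsmul : ∀ (c : MonoidAlgebra (ZMod p) G) (x : N), φfun (c • x) = c • φfun x := by
      intro c x
      obtain ⟨a, rfl⟩ := redHom_surjective p G c
      obtain ⟨m, rfl⟩ := hπ x
      rw [← hcompat, hφπ, hφπ, LinearMap.map_smul, smul_eq_mul, map_mul, smul_eq_mul]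
    let φ : N →ₗ[MonoidAlgebra (ZMod p) G] MonoidAlgebra (ZMod p) G :=
      { toFun := φfun, map_add' := hadd, map_smul' := hsmul }
    have hφ0 : φ = 0 := Subsingleton.elim _ _
    have key : ∀ m, redHom p G (g m) = 0 := by
      intro m
      rw [← hφπ m]
      show φ (π m) = 0
      rw [hφ0]
      rfl
    have hdiv : ∀ m, ∃ b : Λ, g m = r * b := by
      intro m
      have h0 : ∀ γ : G, ∃ c : ℤ_[p], (g m).coeff γ = (p : ℤ_[p]) * c := by
        intro γ
        have h1 : PadicInt.toZMod ((g m).coeff γ) = 0 := by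
          rw [← redHom_apply, key m]; rfl
        have h2 : (g m).coeff γ ∈ RingHom.ker (PadicInt.toZMod (p := p)) := h1
        rw [PadicInt.ker_toZMod, PadicInt.maximalIdeal_eq_span_p,
          Ideal.mem_span_singleton] at h2
        obtain ⟨c, hc⟩ := h2
        exact ⟨c, hc⟩
      choose c hc using h0
      refine ⟨MonoidAlgebra.ofCoeff (Finsupp.onFinset (g m).coeff.support c ?_), MonoidAlgebra.ext (Finsupp.ext fun γ => ?_)⟩
      · intro γ hγ
        rw [Finsupp.mem_support_iff]
        intro h
        have h2 : (p : ℤ_[p]) * c γ = 0 := (hc γ).symm.trans h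
        exact hγ ((mul_eq_zero.mp h2).resolve_left hp0)
      · rw [hr_apply]; exact hc γ
    choose b hb using hdiv
    refine ⟨{ toFun := b, map_add' := ?_, map_smul' := ?_ }, hb⟩
    · intro m m'
      apply hcancel
      rw [mul_add, ← hb, ← hb, ← hb, map_add]
    · intro a m
      apply hcancel
      show r * b (a • m) = r * (a • b m)
      rw [← hb, LinearMap.map_smul, smul_eq_mul, smul_eq_mul, hb m, ← mul_assoc,
        ← mul_assoc, hr, ← Algebra.commutes]
  -- now obtain infinite divisibility
  have main : ∀ n : ℕ, ∀ f : M →ₗ[Λ] Λ, ∃ g : M →ₗ[Λ] Λ, ∀ m, f m = r ^ n * g m := by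
    intro n
    induction n with
    | zero => intro f; exact ⟨f, fun m => by rw [pow_zero, one_mul]⟩
    | succ n ih =>
        intro f
        obtain ⟨g, hg⟩ := ih f
        obtain ⟨g', hg'⟩ := step g
        exact ⟨g', fun m => by rw [hg m, hg' m, pow_succ, mul_assoc]⟩
  constructor
  intro f f'
  suffices hz : ∀ f : M →ₗ[Λ] Λ, f = 0 by rw [hz f, hz f']
  intro f
  refine LinearMap.ext fun m => ?_
  rw [LinearMap.zero_apply]
  refine MonoidAlgebra.ext (Finsupp.ext fun γ => ?_)
  rw [MonoidAlgebra.coeff_zero, Finsupp.coe_zero, Pi.zero_apply]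
  have hn : ∀ n : ℕ, ‖(f m).coeff γ‖ ≤ ((p : ℝ)⁻¹) ^ n := by
    intro n
    obtain ⟨g, hg⟩ := main n f
    have h1 : (f m).coeff γ = (p : ℤ_[p]) ^ n * (g m).coeff γ := by
      have h2 : r ^ n = algebraMap ℤ_[p] Λ ((p : ℤ_[p]) ^ n) := by rw [map_pow, hr]
      rw [hg m, h2, halg]
    rw [h1, norm_mul, norm_pow, PadicInt.norm_p]
    calc ((p:ℝ)⁻¹) ^ n * ‖(g m).coeff γ‖ ≤ ((p:ℝ)⁻¹) ^ n * 1 := by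
          apply mul_le_mul_of_nonneg_left (PadicInt.norm_le_one _)
          positivity
      _ = ((p:ℝ)⁻¹) ^ n := mul_one _
  have hlim : Filter.Tendsto (fun n : ℕ => ((p : ℝ)⁻¹) ^ n) Filter.atTop (nhds 0) := by
    apply tendsto_pow_atTop_nhds_zero_of_lt_one
    · positivity
    · rw [inv_lt_one_iff₀]
      right
      exact_mod_cast hp.one_lt
  have h0 : ‖(f m).coeff γ‖ ≤ 0 := ge_of_tendsto' hlim hn
  exact norm_le_zero_iff.mp h0
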